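/- (Nonsingularity of the projected Jacobian.) Let k ≥ 1, let B̂ ∈ ℝ^{(k+1)×(k+1)} be a lower bidiagonal matrix (B̂_{ij} = 0 unless i = j or i = j + 1) with all diagonal entries nonzero, and let B ∈ ℝ^{(k+1)×k} consist of the first k columns of B̂. Let c ∈ ℝ^{k+1}, y ∈ ℝ^k and λ ≥ 0. If the last component of By − c equals zero and ‖By − c‖ > 0, then Bᵀ(By − c) ≠ 0, and consequently the projected Jacobian J⁽ᵏ⁾(y,λ) = [[λBᵀB + I_k, Bᵀ(By − c)], [(By − c)ᵀB, 0]] is nonsingular. -/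

import Mathlib

open Matrix

/-- Nonsingularity of the projected Jacobian: let `B̂ ∈ ℝ^{(k+1)×(k+1)}` be lower
bidiagonal with nonzero diagonal entries, `B` its first `k` columns, `λ ≥ 0`.
If the last component of `By − c` is zero and `‖By − c‖ > 0`, then
`Bᵀ(By − c) ≠ 0` and the projected Jacobian
`J⁽ᵏ⁾(y,λ) = [[λBᵀB + I, Bᵀ(By − c)], [(By − c)ᵀB, 0]]` is nonsingular. -/
theorem projected_jacobian_nonsingular {k : ℕ} (hk : 1 ≤ k)
    (Bhat : Matrix (Fin (k + 1)) (Fin (k + 1)) ℝ)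
    (hbd : ∀ i j : Fin (k + 1), (i : ℕ) ≠ (j : ℕ) → (i : ℕ) ≠ (j : ℕ) + 1 → Bhat i j = 0)
    (hdiag : ∀ i, Bhat i i ≠ 0)
    (c : Fin (k + 1) → ℝ) (y : Fin k → ℝ) (lam : ℝ) (hlam : 0 ≤ lam)
    (B : Matrix (Fin (k + 1)) (Fin k) ℝ) (hB : B = Bhat.submatrix id Fin.castSucc)
    (hlast : (B *ᵥ y - c) (Fin.last k) = 0)
    (hpos : 0 < Real.sqrt ((B *ᵥ y - c) ⬝ᵥ (B *ᵥ y - c))) :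
    Bᵀ *ᵥ (B *ᵥ y - c) ≠ 0
    ∧ IsUnit (Matrix.fromBlocks (lam • (Bᵀ * B) + 1)
        (Matrix.replicateCol (Fin 1) (Bᵀ *ᵥ (B *ᵥ y - c)))
        (Matrix.replicateRow (Fin 1) (Bᵀ *ᵥ (B *ᵥ y - c))) (0 : Matrix (Fin 1) (Fin 1) ℝ)).det := by
  set r := B *ᵥ y - c with hr
  have hrne : r ≠ 0 := by
    intro h
    rw [h] at hpos
    simp at hpos
  -- Part 1: Bᵀ r ≠ 0
  have hu : Bᵀ *ᵥ r ≠ 0 := by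
    intro h0
    apply hrne
    -- downward induction
    have key : ∀ d : ℕ, ∀ i : Fin (k + 1), (i : ℕ) = k - d → r i = 0 := by
      intro d
      induction d with
      | zero =>
        intro i hi
        have : i = Fin.last k := by
          ext; simpa using hi
        rw [this]; exact hlast
      | succ d ih =>
        intro i hi
        by_cases hdk : k ≤ d
        · exact ih i (by omega)
        · have hik : (i : ℕ) < k := by omega
          set j : Fin k := ⟨(i : ℕ), hik⟩ with hj
          have hsum : (Bᵀ *ᵥ r) j = 0 := by rw [h0]; rfl
          have hne : i ≠ Fin.last k := by
            intro h
            rw [h] at hik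
            simp [Fin.last] at hik
          have hi1 : ((i + 1 : Fin (k + 1)) : ℕ) = (i : ℕ) + 1 := by
            rw [Fin.val_add_one, if_neg hne]
          have hnext : r (i + 1) = 0 := by
            apply ih
            omega
          have hexp : (Bᵀ *ᵥ r) j = B i j * r i := by
            rw [mulVec, dotProduct]
            rw [show (fun i' => Bᵀ j i' * r i') = fun i' => B i' j * r i' from rfl]
            apply Finset.sum_eq_single i
            · intro b _ hb
              by_cases hb1 : (b : ℕ) = (i : ℕ) + 1
              · have : b = i + 1 := by
                  ext
                  rw [hb1, hi1]
                rw [this, hnext, mul_zero]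
              · have : B b j = 0 := by
                  rw [hB]
                  apply hbd
                  · simpa [hj] using fun h => hb (Fin.ext h)
                  · simpa [hj] using hb1
                rw [this, zero_mul]
            · intro h; exact absurd (Finset.mem_univ i) h
          have hBij : B i j ≠ 0 := by
            rw [hB]
            simp only [submatrix_apply, id_eq]
            have : Fin.castSucc j = i := by ext; simp [hj]
            rw [this]
            exact hdiag i
          have := hexp ▸ hsum
          exact (mul_eq_zero.mp this).resolve_left hBij
    funext i
    exact key (k - i) i (by omega) ▸ rfl
  refine ⟨hu, ?_⟩
  -- Part 2
  set u := Bᵀ *ᵥ r with hudef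
  set A := lam • (Bᵀ * B) + 1 with hA
  have hBtB : (Bᵀ * B).PosSemidef := by
    have := Matrix.posSemidef_conjTranspose_mul_self (R := ℝ) B
    rwa [conjTranspose_eq_transpose_of_trivial] at this
  have hsmul : (lam • (Bᵀ * B)).PosSemidef := by
    refine ⟨?_, fun x => ?_⟩
    · show (lam • (Bᵀ * B))ᴴ = _
      rw [conjTranspose_smul, star_trivial, hBtB.1]
    · exact (hBtB.smul hlam).2 x
  have hApd : A.PosDef := Matrix.PosDef.posSemidef_add hsmul Matrix.PosDef.one
  have := hApd.isUnit.invertible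
  rw [Matrix.det_fromBlocks₁₁]
  have hinv : ⅟A = A⁻¹ := invOf_eq_nonsing_inv A
  have hdot : (Matrix.replicateRow (Fin 1) u * ⅟A * Matrix.replicateCol (Fin 1) u) 0 0 = u ⬝ᵥ (A⁻¹ *ᵥ u) := by
    rw [hinv]
    simp only [Matrix.mul_apply, Matrix.replicateRow_apply, Matrix.replicateCol_apply, mulVec, dotProduct,
      Finset.mul_sum, Finset.sum_mul]
    rw [Finset.sum_comm]
    apply Finset.sum_congr rfl
    intro i _
    apply Finset.sum_congr rfl
    intro j _
    ring
  have hposdot : 0 < u ⬝ᵥ (A⁻¹ *ᵥ u) := by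
    have := hApd.inv.dotProduct_mulVec_pos hu
    simpa using this
  rw [det_fin_one]
  simp only [Matrix.sub_apply, Matrix.zero_apply, hdot, zero_sub]
  rw [isUnit_iff_ne_zero]
  exact mul_ne_zero hApd.det_pos.ne' (neg_ne_zero.mpr hposdot.ne')
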